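/- The proof system KT⊡ = K⊡ + the axiom φ → (⊡φ → (⊡(φ → ψ) → ⊡ψ)) is sound and strongly complete with respect to the class of reflexive bimodal frames, and also with respect to the class of bimodal frames ⟨S, R1, R2⟩ in which R1 is reflexive or R2 is reflexive: Γ ⊢_{KT⊡} φ if and only if every pointed model based on a frame in the class satisfying all of Γ also satisfies φ. -/

import Mathlib

/-- Formulas of the language L(⊡): propositional variables, ¬, ∧, and ⊡ (`box`). -/
inductive Form : Type
  | var : ℕ → Form
  | neg : Form → Form
  | conj : Form → Form → Form
  | box : Form → Form

namespace Form
/-- Implication, defined as usual. -/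
def imp (φ ψ : Form) : Form := neg (conj φ (neg ψ))
/-- Disjunction, defined as usual. -/
def disj (φ ψ : Form) : Form := neg (conj (neg φ) (neg ψ))
/-- Biconditional, defined as usual. -/
def biff (φ ψ : Form) : Form := conj (imp φ ψ) (imp ψ φ)
/-- The constant ⊤. -/
def top : Form := imp (var 0) (var 0)
end Form

/-- A bimodal model: a nonempty set of worlds, two accessibility relations and a valuation. -/
structure BiModel : Type 1 where
  S : Type
  ne : Nonempty S
  R1 : S → S → Prop
  R2 : S → S → Prop
  V : ℕ → Set S

/-- Truth of a formula at a world: ⊡φ holds at s iff all R1-successors and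
R2-successors of s agree on the truth value of φ. -/
def sat (M : BiModel) : M.S → Form → Prop
  | s, .var n => s ∈ M.V n
  | s, .neg φ => ¬ sat M s φ
  | s, .conj φ ψ => sat M s φ ∧ sat M s ψ
  | s, .box φ => ∀ t u, M.R1 s t → M.R2 s u → (sat M t φ ↔ sat M u φ)

/-- Boolean evaluation treating boxed formulas as atoms (for defining tautologies). -/
def beval (v : Form → Bool) : Form → Bool
  | .var n => v (.var n)
  | .neg φ => !beval v φ
  | .conj φ ψ => beval v φ && beval v ψ
  | .box φ => v (.box φ)

/-- φ is an instance of a propositional tautology. -/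
def Form.isTaut (φ : Form) : Prop := ∀ v : Form → Bool, beval v φ = true

/-- Theorems of the system K⊡ extended with the extra axioms in `Ext`:
propositional tautologies, ⊡⊤, ⊡EQU, ⊡CON, ⊡DIS, extra axioms,
closed under modus ponens and RE⊡. -/
inductive KThm (Ext : Form → Prop) : Form → Prop
  | taut {φ : Form} : φ.isTaut → KThm Ext φ
  | boxTop : KThm Ext (Form.box Form.top)
  | equ (φ : Form) : KThm Ext ((Form.box φ).biff (Form.box (Form.neg φ)))
  | con (φ ψ : Form) :
      KThm Ext (((Form.box φ).conj (Form.box ψ)).imp (Form.box (φ.conj ψ)))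
  | dis (φ ψ χ : Form) :
      KThm Ext ((Form.box φ).imp
        ((Form.box (φ.disj ψ)).disj (Form.box ((Form.neg φ).disj χ))))
  | ext {φ : Form} : Ext φ → KThm Ext φ
  | mp {φ ψ : Form} : KThm Ext (φ.imp ψ) → KThm Ext φ → KThm Ext ψ
  | re {φ ψ : Form} : KThm Ext (φ.biff ψ) → KThm Ext ((Form.box φ).biff (Form.box ψ))

/-- Γ ⊢ φ: φ is derivable from theorems of the system together with premises
in Γ using modus ponens. -/
inductive Deriv (Ext : Form → Prop) (Γ : Set Form) : Form → Prop
  | thm {φ : Form} : KThm Ext φ → Deriv Ext Γ φ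
  | prem {φ : Form} : φ ∈ Γ → Deriv Ext Γ φ
  | mp {φ ψ : Form} : Deriv Ext Γ (φ.imp ψ) → Deriv Ext Γ φ → Deriv Ext Γ ψ

/-- No extra axioms: the minimal system K⊡. -/
def NoExt : Form → Prop := fun _ => False

/-- Instances of the axiom ⊡T: φ → (⊡φ → (⊡(φ → ψ) → ⊡ψ)). -/
def TAx : Form → Prop := fun θ =>
  ∃ φ ψ : Form,
    θ = φ.imp ((Form.box φ).imp ((Form.box (φ.imp ψ)).imp (Form.box ψ)))

section Auxiliary

open Form

/-! ### Semantic simp lemmas -/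

lemma sat_imp {M : BiModel} {s : M.S} {φ ψ : Form} :
    sat M s (φ.imp ψ) ↔ (sat M s φ → sat M s ψ) := by
  simp only [Form.imp, sat]; tauto

lemma sat_disj {M : BiModel} {s : M.S} {φ ψ : Form} :
    sat M s (φ.disj ψ) ↔ (sat M s φ ∨ sat M s ψ) := by
  simp only [Form.disj, sat]; tauto

lemma sat_biff {M : BiModel} {s : M.S} {φ ψ : Form} :
    sat M s (φ.biff ψ) ↔ (sat M s φ ↔ sat M s ψ) := by
  simp only [Form.biff, sat, sat_imp]; tauto

lemma sat_top {M : BiModel} {s : M.S} : sat M s Form.top :=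
  sat_imp.mpr id

/-! ### Tautologies -/

lemma sat_of_taut {M : BiModel} {s : M.S} {φ : Form} (h : φ.isTaut) :
    sat M s φ := by
  classical
  have key : ∀ χ, beval (fun ψ => decide (sat M s ψ)) χ = true ↔ sat M s χ := by
    intro χ
    induction χ with
    | var n => simp [beval]
    | neg χ ih => simp [beval, sat, ← ih]
    | conj χ₁ χ₂ ih1 ih2 => simp [beval, sat, ih1, ih2]
    | box χ _ => simp [beval]
  exact (key φ).mp (h _)

end Auxiliary
section ProofTheory

abbrev Prv (φ : Form) : Prop := KThm TAx φ

/-- derived necessity: □φ := φ ∧ ⊡φ -/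
def boxd (φ : Form) : Form := Form.conj φ (Form.box φ)

def fbot : Form := Form.neg Form.top

lemma taut_k {φ ψ : Form} : Prv (φ.imp (ψ.imp φ)) := by
  apply KThm.taut; intro v
  simp only [Form.imp, beval]
  cases beval v φ <;> cases beval v ψ <;> rfl

lemma taut_s {φ ψ χ : Form} :
    Prv ((φ.imp (ψ.imp χ)).imp ((φ.imp ψ).imp (φ.imp χ))) := by
  apply KThm.taut; intro v
  simp only [Form.imp, beval]
  cases beval v φ <;> cases beval v ψ <;> cases beval v χ <;> rfl

lemma taut_id {φ : Form} : Prv (φ.imp φ) := by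
  apply KThm.taut; intro v
  simp only [Form.imp, beval]
  cases beval v φ <;> rfl

lemma taut_neg_intro {φ : Form} : Prv ((φ.imp fbot).imp φ.neg) := by
  apply KThm.taut; intro v
  simp only [Form.imp, Form.top, fbot, beval]
  cases beval v φ <;> cases v (Form.var 0) <;> rfl

lemma taut_dne {φ : Form} : Prv ((φ.neg.imp fbot).imp φ) := by
  apply KThm.taut; intro v
  simp only [Form.imp, Form.top, fbot, beval]
  cases beval v φ <;> cases v (Form.var 0) <;> rfl

lemma taut_bot_intro {φ : Form} : Prv (φ.imp (φ.neg.imp fbot)) := by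
  apply KThm.taut; intro v
  simp only [Form.imp, Form.top, fbot, beval]
  cases beval v φ <;> cases v (Form.var 0) <;> rfl

lemma taut_conj1 {φ ψ : Form} : Prv ((φ.conj ψ).imp φ) := by
  apply KThm.taut; intro v
  simp only [Form.imp, beval]
  cases beval v φ <;> cases beval v ψ <;> rfl

lemma taut_conj2 {φ ψ : Form} : Prv ((φ.conj ψ).imp ψ) := by
  apply KThm.taut; intro v
  simp only [Form.imp, beval]
  cases beval v φ <;> cases beval v ψ <;> rfl

lemma taut_conj_intro {φ ψ : Form} : Prv (φ.imp (ψ.imp (φ.conj ψ))) := by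
  apply KThm.taut; intro v
  simp only [Form.imp, beval]
  cases beval v φ <;> cases beval v ψ <;> rfl

lemma taut_biff_mp {φ ψ : Form} : Prv ((φ.biff ψ).imp (φ.imp ψ)) := by
  apply KThm.taut; intro v
  simp only [Form.imp, Form.biff, beval]
  cases beval v φ <;> cases beval v ψ <;> rfl

lemma taut_biff_mpr {φ ψ : Form} : Prv ((φ.biff ψ).imp (ψ.imp φ)) := by
  apply KThm.taut; intro v
  simp only [Form.imp, Form.biff, beval]
  cases beval v φ <;> cases beval v ψ <;> rfl

lemma taut_biff_top {φ : Form} : Prv (φ.imp (φ.biff Form.top)) := by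
  apply KThm.taut; intro v
  simp only [Form.imp, Form.biff, Form.top, beval]
  cases beval v φ <;> cases v (Form.var 0) <;> rfl

/-- ⊡T-instance implies the K axiom for the derived box □φ = φ ∧ ⊡φ. -/
lemma taut_tk {φ ψ : Form} :
    Prv ((φ.imp ((Form.box φ).imp ((Form.box (φ.imp ψ)).imp (Form.box ψ)))).imp
      ((boxd (φ.imp ψ)).imp ((boxd φ).imp (boxd ψ)))) := by
  apply KThm.taut; intro v
  simp only [Form.imp, boxd, beval]
  cases beval v φ <;> cases beval v ψ <;>
    cases v (Form.box φ) <;> cases v (Form.box ψ) <;>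
    cases v (Form.box (Form.neg (Form.conj φ (Form.neg ψ)))) <;> rfl

lemma prv_mp2 {a b c : Form} (h : Prv (a.imp (b.imp c))) (h1 : Prv a) (h2 : Prv b) :
    Prv c := KThm.mp (KThm.mp h h1) h2

/-- Necessitation for ⊡. -/
lemma prv_box_of_prv {φ : Form} (h : Prv φ) : Prv (Form.box φ) := by
  have h1 : Prv (φ.biff Form.top) := KThm.mp taut_biff_top h
  have h2 : Prv ((Form.box φ).biff (Form.box Form.top)) := KThm.re h1
  exact KThm.mp (KThm.mp taut_biff_mpr h2) KThm.boxTop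

/-- Necessitation for the derived box. -/
lemma prv_boxd_of_prv {φ : Form} (h : Prv φ) : Prv (boxd φ) :=
  prv_mp2 taut_conj_intro h (prv_box_of_prv h)

/-- K for the derived box. -/
lemma prv_kdist {φ ψ : Form} :
    Prv ((boxd (φ.imp ψ)).imp ((boxd φ).imp (boxd ψ))) :=
  KThm.mp taut_tk (KThm.ext ⟨φ, ψ, rfl⟩)

lemma Deriv.mono {Ext : Form → Prop} {Γ Γ' : Set Form} {φ : Form}
    (h : Deriv Ext Γ φ) (hs : Γ ⊆ Γ') : Deriv Ext Γ' φ := by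
  induction h with
  | thm h => exact .thm h
  | prem h => exact .prem (hs h)
  | mp _ _ ih1 ih2 => exact .mp ih1 ih2

lemma deduction {Γ : Set Form} {φ ψ : Form}
    (h : Deriv TAx (insert φ Γ) ψ) : Deriv TAx Γ (φ.imp ψ) := by
  induction h with
  | thm h => exact .mp (.thm taut_k) (.thm h)
  | prem h =>
    rcases Set.mem_insert_iff.mp h with h | h
    · subst h; exact .thm taut_id
    · exact .mp (.thm taut_k) (.prem h)
  | mp _ _ ih1 ih2 => exact .mp (.mp (.thm taut_s) ih1) ih2

def ConS (Γ : Set Form) : Prop := ¬ Deriv TAx Γ fbot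

lemma deriv_neg_of {Γ : Set Form} {φ : Form} (h : Deriv TAx (insert φ Γ) fbot) :
    Deriv TAx Γ φ.neg := .mp (.thm taut_neg_intro) (deduction h)

lemma deriv_of_neg {Γ : Set Form} {φ : Form} (h : Deriv TAx (insert φ.neg Γ) fbot) :
    Deriv TAx Γ φ := .mp (.thm taut_dne) (deduction h)

lemma deriv_bot_of_both {Γ : Set Form} {φ : Form}
    (h1 : Deriv TAx Γ φ) (h2 : Deriv TAx Γ φ.neg) : Deriv TAx Γ fbot :=
  .mp (.mp (.thm taut_bot_intro) h1) h2

lemma Deriv.finite {Ext : Form → Prop} {Γ : Set Form} {φ : Form}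
    (h : Deriv Ext Γ φ) : ∃ Δ ⊆ Γ, Δ.Finite ∧ Deriv Ext Δ φ := by
  induction h with
  | thm h => exact ⟨∅, by simp, Set.finite_empty, .thm h⟩
  | @prem ψ h => exact ⟨{ψ}, by simpa, Set.finite_singleton _, .prem rfl⟩
  | mp _ _ ih1 ih2 =>
    obtain ⟨Δ1, hs1, hf1, hd1⟩ := ih1
    obtain ⟨Δ2, hs2, hf2, hd2⟩ := ih2
    exact ⟨Δ1 ∪ Δ2, Set.union_subset hs1 hs2, hf1.union hf2,
      .mp (hd1.mono Set.subset_union_left) (hd2.mono Set.subset_union_right)⟩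

end ProofTheory
section Lindenbaum

def MCS (Γ : Set Form) : Prop := ConS Γ ∧ ∀ φ : Form, φ ∈ Γ ∨ Form.neg φ ∈ Γ

lemma finite_subset_chain {c : Set (Set Form)} (hc : IsChain (· ⊆ ·) c)
    (hne : c.Nonempty) {Δ : Set Form} (hfin : Δ.Finite) (hsub : Δ ⊆ ⋃₀ c) :
    ∃ m ∈ c, Δ ⊆ m := by
  refine Set.Finite.induction_on (motive := fun s _ => s ⊆ ⋃₀ c → ∃ m ∈ c, s ⊆ m) Δ hfin
    (fun _ => ⟨hne.choose, hne.choose_spec, Set.empty_subset _⟩) ?_ hsub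
  intro a Δ' _ _ ih hsub'
  obtain ⟨m, hm, hmsub⟩ := ih (Set.Subset.trans (Set.subset_insert _ _) hsub')
  obtain ⟨m', hm', ham'⟩ := hsub' (Set.mem_insert a Δ')
  rcases eq_or_ne m m' with rfl | hne'
  · exact ⟨m, hm, Set.insert_subset ham' hmsub⟩
  rcases hc hm hm' hne' with h | h
  · exact ⟨m', hm', Set.insert_subset ham' (hmsub.trans h)⟩
  · exact ⟨m, hm, Set.insert_subset (h ham') hmsub⟩

lemma lindenbaum {Γ : Set Form} (h : ConS Γ) : ∃ Δ, Γ ⊆ Δ ∧ MCS Δ := by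
  obtain ⟨m, hsub, hmax⟩ := zorn_subset_nonempty {Δ : Set Form | ConS Δ}
    (fun c hcS hchain hcne => by
      refine ⟨⋃₀ c, ?_, fun s hs => Set.subset_sUnion_of_mem hs⟩
      intro hd
      obtain ⟨Δ, hΔsub, hΔfin, hΔd⟩ := hd.finite
      obtain ⟨m, hm, hmsub⟩ := finite_subset_chain hchain hcne hΔfin hΔsub
      exact hcS hm (hΔd.mono hmsub)) Γ h
  refine ⟨m, hsub, hmax.prop, fun φ => ?_⟩
  by_contra hcon
  push_neg at hcon
  obtain ⟨h1, h2⟩ := hcon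
  -- both insertions are inconsistent, hence m is inconsistent
  have c1 : ¬ ConS (insert φ m) := fun hc => h1 (hmax.mem_of_prop_insert (hc : _ ∈ {Δ | ConS Δ}))
  have c2 : ¬ ConS (insert (Form.neg φ) m) := fun hc =>
    h2 (hmax.mem_of_prop_insert (hc : _ ∈ {Δ | ConS Δ}))
  apply hmax.prop
  have d1 : Deriv TAx m (Form.neg φ) := deriv_neg_of (by_contra fun hx => c1 hx)
  have d2 : Deriv TAx m φ := deriv_of_neg (by_contra fun hx => c2 hx)
  exact deriv_bot_of_both d2 d1

lemma MCS.closed {Γ : Set Form} (h : MCS Γ) {φ : Form} (hd : Deriv TAx Γ φ) : φ ∈ Γ := by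
  rcases h.2 φ with hm | hm
  · exact hm
  · exact absurd (deriv_bot_of_both hd (.prem hm)) h.1

lemma MCS.mem_of_prv {Γ : Set Form} (h : MCS Γ) {φ : Form} (hp : Prv φ) : φ ∈ Γ :=
  h.closed (.thm hp)

lemma MCS.neg_mem_iff {Γ : Set Form} (h : MCS Γ) {φ : Form} :
    Form.neg φ ∈ Γ ↔ φ ∉ Γ := by
  constructor
  · intro hn hφ
    exact h.1 (deriv_bot_of_both (.prem hφ) (.prem hn))
  · intro hφ
    rcases h.2 φ with hm | hm
    · exact absurd hm hφ
    · exact hm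

lemma MCS.conj_mem_iff {Γ : Set Form} (h : MCS Γ) {φ ψ : Form} :
    Form.conj φ ψ ∈ Γ ↔ φ ∈ Γ ∧ ψ ∈ Γ := by
  constructor
  · intro hm
    exact ⟨h.closed (.mp (.thm taut_conj1) (.prem hm)),
      h.closed (.mp (.thm taut_conj2) (.prem hm))⟩
  · intro ⟨h1, h2⟩
    exact h.closed (.mp (.mp (.thm taut_conj_intro) (.prem h1)) (.prem h2))

end Lindenbaum
section Soundness

/-- Soundness of the axioms and rules over frames where R1 or R2 is reflexive. -/
lemma kthm_sound {φ : Form} (h : KThm TAx φ) :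
    ∀ M : BiModel, (Reflexive M.R1 ∨ Reflexive M.R2) → ∀ s : M.S, sat M s φ := by
  induction h with
  | taut h => exact fun M _ s => sat_of_taut h
  | boxTop =>
    intro M _ s
    exact fun t u _ _ => iff_of_true sat_top sat_top
  | equ φ =>
    intro M _ s
    refine sat_biff.mpr ⟨fun h t u ht hu => ?_, fun h t u ht hu => ?_⟩
    · simpa [sat] using (h t u ht hu).not
    · have := (h t u ht hu)
      simp only [sat] at this
      exact not_iff_not.mp this
  | con φ ψ =>
    intro M _ s
    refine sat_imp.mpr fun hc t u ht hu => ?_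
    obtain ⟨h1, h2⟩ : sat M s (Form.box φ) ∧ sat M s (Form.box ψ) := hc
    simp only [sat]
    rw [h1 t u ht hu, h2 t u ht hu]
  | dis φ ψ χ =>
    intro M _ s
    refine sat_imp.mpr fun hb => ?_
    by_cases h1 : ∃ t, M.R1 s t
    · by_cases h2 : ∃ u, M.R2 s u
      · obtain ⟨t0, ht0⟩ := h1
        obtain ⟨u0, hu0⟩ := h2
        by_cases hv : sat M u0 φ
        · refine sat_disj.mpr (Or.inl fun t u ht hu => ?_)
          have hφt : sat M t φ := (hb t u0 ht hu0).mpr hv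
          have hφu : sat M u φ := (hb t0 u ht0 hu).mp ((hb t0 u0 ht0 hu0).mpr hv)
          exact iff_of_true (sat_disj.mpr (Or.inl hφt)) (sat_disj.mpr (Or.inl hφu))
        · refine sat_disj.mpr (Or.inr fun t u ht hu => ?_)
          have hφt : ¬ sat M t φ := fun hc => hv ((hb t u0 ht hu0).mp hc)
          have hφu : ¬ sat M u φ := fun hc => hv ((hb t0 u0 ht0 hu0).mp ((hb t0 u ht0 hu).mpr hc))
          exact iff_of_true (sat_disj.mpr (Or.inl (by simpa [sat] using hφt)))
            (sat_disj.mpr (Or.inl (by simpa [sat] using hφu)))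
      · exact sat_disj.mpr (Or.inl fun t u _ hu => absurd ⟨u, hu⟩ h2)
    · exact sat_disj.mpr (Or.inl fun t u ht _ => absurd ⟨t, ht⟩ h1)
  | ext hext =>
    obtain ⟨φ, ψ, rfl⟩ := hext
    intro M hrefl s
    refine sat_imp.mpr fun hφ => sat_imp.mpr fun hbφ => sat_imp.mpr fun hbi => ?_
    intro t u ht hu
    have hφt : sat M t φ ∧ sat M u φ := by
      rcases hrefl with hr | hr
      · have hu' : sat M u φ := (hbφ s u (hr s) hu).mp hφ
        exact ⟨(hbφ t u ht hu).mpr hu', hu'⟩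
      · have ht' : sat M t φ := (hbφ t s ht (hr s)).mpr hφ
        exact ⟨ht', (hbφ t u ht hu).mp ht'⟩
    have hit : sat M t (φ.imp ψ) ↔ sat M u (φ.imp ψ) := hbi t u ht hu
    rw [sat_imp, sat_imp] at hit
    constructor
    · intro hψt
      exact (hit.mp fun _ => hψt) hφt.2
    · intro hψu
      exact (hit.mpr fun _ => hψu) hφt.1
  | mp _ _ ih1 ih2 =>
    intro M hr s
    exact (sat_imp.mp (ih1 M hr s)) (ih2 M hr s)
  | re _ ih =>
    intro M hr s
    refine sat_biff.mpr ⟨fun h t u ht hu => ?_, fun h t u ht hu => ?_⟩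
    · rw [← sat_biff.mp (ih M hr t), ← sat_biff.mp (ih M hr u)]
      exact h t u ht hu
    · rw [sat_biff.mp (ih M hr t), sat_biff.mp (ih M hr u)]
      exact h t u ht hu

lemma deriv_sound {Γ : Set Form} {φ : Form} (h : Deriv TAx Γ φ) :
    ∀ M : BiModel, (Reflexive M.R1 ∨ Reflexive M.R2) → ∀ s : M.S,
      (∀ γ ∈ Γ, sat M s γ) → sat M s φ := by
  induction h with
  | thm h => exact fun M hr s _ => kthm_sound h M hr s
  | prem h => exact fun M _ s hΓ => hΓ _ h
  | mp _ _ ih1 ih2 =>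
    exact fun M hr s hΓ => (sat_imp.mp (ih1 M hr s hΓ)) (ih2 M hr s hΓ)

/-- The empty set is consistent. -/
lemma empty_con : ConS (∅ : Set Form) := by
  intro hd
  have := deriv_sound hd
    ⟨PUnit, ⟨PUnit.unit⟩, fun _ _ => True, fun _ _ => True, fun _ => ∅⟩
    (Or.inl fun _ => trivial) PUnit.unit (by simp)
  exact this sat_top

end Soundness
section Canonical

lemma deriv_boxd {X : Set Form} {χ : Form} (h : Deriv TAx X χ) :
    Deriv TAx (boxd '' X) (boxd χ) := by
  induction h with
  | thm h => exact .thm (prv_boxd_of_prv h)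
  | prem h => exact .prem ⟨_, h, rfl⟩
  | mp _ _ ih1 ih2 => exact .mp (.mp (.thm prv_kdist) ih1) ih2

def canR (Γ Δ : Set Form) : Prop := ∀ φ : Form, boxd φ ∈ Γ → φ ∈ Δ

def canM : BiModel where
  S := {Γ : Set Form // MCS Γ}
  ne := by
    obtain ⟨Δ, _, hΔ⟩ := lindenbaum empty_con
    exact ⟨⟨Δ, hΔ⟩⟩
  R1 := fun a b => canR a.1 b.1
  R2 := fun a b => canR a.1 b.1
  V := fun n => {a | Form.var n ∈ a.1}

lemma canR_refl : Reflexive canM.R1 := fun a φ h => (a.2.conj_mem_iff.mp h).1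

lemma box_neg_of_box {Γ : Set Form} (h : MCS Γ) {φ : Form}
    (hb : Form.box φ ∈ Γ) : Form.box (Form.neg φ) ∈ Γ :=
  h.closed (.mp (.thm (KThm.mp taut_biff_mp (KThm.equ φ))) (.prem hb))

lemma box_of_box_neg {Γ : Set Form} (h : MCS Γ) {φ : Form}
    (hb : Form.box (Form.neg φ) ∈ Γ) : Form.box φ ∈ Γ :=
  h.closed (.mp (.thm (KThm.mp taut_biff_mpr (KThm.equ φ))) (.prem hb))

lemma succ_con {Γ : Set Form} (h : MCS Γ) {φ : Form} (hnb : Form.box φ ∉ Γ) :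
    ConS (insert φ {ψ | boxd ψ ∈ Γ}) ∧ ConS (insert (Form.neg φ) {ψ | boxd ψ ∈ Γ}) := by
  have himg : boxd '' {ψ | boxd ψ ∈ Γ} ⊆ Γ := by
    rintro θ ⟨ψ, hψ, rfl⟩; exact hψ
  constructor
  · intro hd
    have h1 : Deriv TAx {ψ | boxd ψ ∈ Γ} (Form.neg φ) := deriv_neg_of hd
    have h2 : Deriv TAx Γ (boxd (Form.neg φ)) := (deriv_boxd h1).mono himg
    have h3 : Form.box (Form.neg φ) ∈ Γ := (h.conj_mem_iff.mp (h.closed h2)).2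
    exact hnb (box_of_box_neg h h3)
  · intro hd
    have h1 : Deriv TAx {ψ | boxd ψ ∈ Γ} φ := deriv_of_neg hd
    have h2 : Deriv TAx Γ (boxd φ) := (deriv_boxd h1).mono himg
    exact hnb ((h.conj_mem_iff.mp (h.closed h2)).2)

lemma truth_lemma : ∀ (φ : Form) (a : canM.S), sat canM a φ ↔ φ ∈ a.1 := by
  intro φ
  induction φ with
  | var n => exact fun a => Iff.rfl
  | neg φ ih =>
    intro a
    simp only [sat, ih]
    exact (a.2.neg_mem_iff).symm
  | conj φ ψ ih1 ih2 =>
    intro a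
    simp only [sat, ih1, ih2]
    exact (a.2.conj_mem_iff).symm
  | box φ ih =>
    intro a
    constructor
    · intro hsat
      by_contra hnb
      obtain ⟨hc1, hc2⟩ := succ_con a.2 hnb
      obtain ⟨Δ1, hs1, hm1⟩ := lindenbaum hc1
      obtain ⟨Δ2, hs2, hm2⟩ := lindenbaum hc2
      have hr1 : canR a.1 Δ1 := fun ψ hψ => hs1 (Set.mem_insert_of_mem _ hψ)
      have hr2 : canR a.1 Δ2 := fun ψ hψ => hs2 (Set.mem_insert_of_mem _ hψ)
      have hiff := hsat ⟨Δ1, hm1⟩ ⟨Δ2, hm2⟩ hr1 hr2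
      replace hiff := (ih ⟨Δ1, hm1⟩).symm.trans (hiff.trans (ih ⟨Δ2, hm2⟩))
      have hφ1 : φ ∈ Δ1 := hs1 (Set.mem_insert _ _)
      have hφ2 : φ ∉ Δ2 := hm2.neg_mem_iff.mp (hs2 (Set.mem_insert _ _))
      exact hφ2 (hiff.mp hφ1)
    · intro hb t u ht hu
      rw [ih, ih]
      rcases a.2.2 φ with hφ | hφ
      · have hd : boxd φ ∈ a.1 := a.2.conj_mem_iff.mpr ⟨hφ, hb⟩
        exact iff_of_true (ht φ hd) (hu φ hd)
      · have hbn : Form.box (Form.neg φ) ∈ a.1 := box_neg_of_box a.2 hb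
        have hd : boxd (Form.neg φ) ∈ a.1 := a.2.conj_mem_iff.mpr ⟨hφ, hbn⟩
        exact iff_of_false ((t.2.neg_mem_iff).mp (ht _ hd)) ((u.2.neg_mem_iff).mp (hu _ hd))

lemma completeness {Γ : Set Form} {φ : Form}
    (h : ∀ M : BiModel, (Reflexive M.R1 ∧ Reflexive M.R2) → ∀ s : M.S,
      (∀ γ ∈ Γ, sat M s γ) → sat M s φ) : Deriv TAx Γ φ := by
  by_contra hnd
  have hcon : ConS (insert (Form.neg φ) Γ) := fun hd => hnd (deriv_of_neg hd)
  obtain ⟨Δ, hsub, hΔ⟩ := lindenbaum hcon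
  have hsatΓ : ∀ γ ∈ Γ, sat canM ⟨Δ, hΔ⟩ γ := fun γ hγ =>
    (truth_lemma γ _).mpr (hsub (Set.mem_insert_of_mem _ hγ))
  have hsatφ := h canM ⟨canR_refl, canR_refl⟩ ⟨Δ, hΔ⟩ hsatΓ
  have hmem := (truth_lemma φ _).mp hsatφ
  exact hΔ.1 (deriv_bot_of_both (.prem hmem) (.prem (hsub (Set.mem_insert _ _))))

end Canonical
/-- KT⊡ = K⊡ + ⊡T is sound and strongly complete with respect to the class of
reflexive bimodal frames, and also with respect to the class of bimodal frames
in which R1 or R2 is reflexive. -/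
theorem stmt15 (Γ : Set Form) (φ : Form) :
    (Deriv TAx Γ φ ↔
      ∀ (M : BiModel), (Reflexive M.R1 ∧ Reflexive M.R2) →
        ∀ s : M.S, (∀ γ ∈ Γ, sat M s γ) → sat M s φ) ∧
    (Deriv TAx Γ φ ↔
      ∀ (M : BiModel), (Reflexive M.R1 ∨ Reflexive M.R2) →
        ∀ s : M.S, (∀ γ ∈ Γ, sat M s γ) → sat M s φ) := by
  constructor
  · constructor
    · intro h M hr s hΓ
      exact deriv_sound h M (Or.inl hr.1) s hΓ
    · exact completeness
  · constructor
    · intro h M hr s hΓ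
      exact deriv_sound h M hr s hΓ
    · intro h
      exact completeness fun M hr s hΓ => h M (Or.inl hr.1) s hΓ
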